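/- If λ < -1 and z = (x₀, y₀) with x₀ > 0 and y₀ > 0, then the first coordinates of the even iterates A^{2n}(z) tend to +∞ as n → ∞ (and likewise the second coordinates), while both coordinates of the odd iterates A^{2n+1}(z) tend to -∞. -/

import Mathlib

noncomputable def A (l : ℝ) : ℝ × ℝ → ℝ × ℝ := fun p => ((⌊l * p.2⌋ : ℤ), (⌊l * p.1⌋ : ℤ))

lemma key_step (l : ℝ) (hl : l < -1) (t : ℝ) (ht : 0 < t) :
    ⌊t⌋ + 1 ≤ ⌊l * (⌊l * t⌋ : ℤ)⌋ := by
  set u : ℤ := ⌊l * t⌋ with hu_def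
  have hu : (u : ℝ) ≤ l * t := Int.floor_le _
  have h1 : (u : ℝ) < -t := hu.trans_lt (by nlinarith)
  have h2 : (⌊t⌋ : ℝ) ≤ t := Int.floor_le t
  have h3 : ⌊t⌋ + 1 ≤ -u := by
    have : (⌊t⌋ : ℝ) < (-u : ℤ) := by push_cast; linarith
    have h' : ⌊t⌋ < -u := by exact_mod_cast this
    omega
  have hfl : (0 : ℤ) ≤ ⌊t⌋ := Int.floor_nonneg.mpr ht.le
  have h3' : (⌊t⌋ : ℝ) + 1 ≤ -(u : ℝ) := by exact_mod_cast (by push_cast [← Int.cast_neg]; exact_mod_cast h3 : ((⌊t⌋ : ℝ) + 1 ≤ ((-u : ℤ) : ℝ)))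
  have hu1 : (1 : ℝ) ≤ -(u : ℝ) := by
    have : (⌊t⌋ : ℝ) ≥ 0 := by exact_mod_cast hfl
    linarith
  have h4 : (⌊t⌋ : ℝ) + 1 ≤ l * u := by nlinarith
  refine Int.le_floor.mpr ?_
  push_cast
  linarith

theorem stmt9 (l : ℝ) (hl : l < -1) (x y : ℝ) (hx : 0 < x) (hy : 0 < y) :
    Filter.Tendsto (fun n => ((A l)^[2 * n] (x, y)).1) Filter.atTop Filter.atTop ∧
    Filter.Tendsto (fun n => ((A l)^[2 * n] (x, y)).2) Filter.atTop Filter.atTop ∧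
    Filter.Tendsto (fun n => ((A l)^[2 * n + 1] (x, y)).1) Filter.atTop Filter.atBot ∧
    Filter.Tendsto (fun n => ((A l)^[2 * n + 1] (x, y)).2) Filter.atTop Filter.atBot := by
  set g : ℕ → ℝ × ℝ := fun n => (A l)^[2 * n] (x, y) with hg
  have hsq : ∀ p : ℝ × ℝ, (A l)^[2] p = (((⌊l * ((⌊l * p.1⌋ : ℤ) : ℝ)⌋ : ℤ) : ℝ), ((⌊l * ((⌊l * p.2⌋ : ℤ) : ℝ)⌋ : ℤ) : ℝ)) := by
    intro p
    show (A l) ((A l)^[1] p) = _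
    simp [A]
  have hgs : ∀ n, g (n + 1) = (A l)^[2] (g n) := by
    intro n
    have : 2 * (n + 1) = 2 + 2 * n := by ring
    simp only [hg, this, Function.iterate_add_apply]
  -- main induction: coordinates positive with floor ≥ n
  have main : ∀ n : ℕ, (0 < (g n).1 ∧ (n : ℤ) ≤ ⌊(g n).1⌋) ∧ (0 < (g n).2 ∧ (n : ℤ) ≤ ⌊(g n).2⌋) := by
    intro n
    induction n with
    | zero =>
      constructor
      · exact ⟨hx, by simpa [hg] using Int.floor_nonneg.mpr hx.le⟩
      · exact ⟨hy, by simpa [hg] using Int.floor_nonneg.mpr hy.le⟩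
    | succ n ih =>
      obtain ⟨⟨h1p, h1f⟩, ⟨h2p, h2f⟩⟩ := ih
      have k1 := key_step l hl (g n).1 h1p
      have k2 := key_step l hl (g n).2 h2p
      rw [hgs n, hsq]
      constructor
      · constructor
        · have : (0 : ℤ) < ⌊l * (⌊l * (g n).1⌋ : ℤ)⌋ := by omega
          simp only
          exact_mod_cast this
        · simp only [Int.floor_intCast]
          push_cast
          omega
      · constructor
        · have : (0 : ℤ) < ⌊l * (⌊l * (g n).2⌋ : ℤ)⌋ := by omega
          simp only
          exact_mod_cast this
        · simp only [Int.floor_intCast]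
          push_cast
          omega
  have hge1 : ∀ n : ℕ, (n : ℝ) ≤ (g n).1 := fun n => by
    have := (main n).1.2
    have h := Int.floor_le (g n).1
    have : ((n : ℤ) : ℝ) ≤ (⌊(g n).1⌋ : ℝ) := by exact_mod_cast this
    push_cast at this
    linarith
  have hge2 : ∀ n : ℕ, (n : ℝ) ≤ (g n).2 := fun n => by
    have := (main n).2.2
    have h := Int.floor_le (g n).2
    have : ((n : ℤ) : ℝ) ≤ (⌊(g n).2⌋ : ℝ) := by exact_mod_cast this
    push_cast at this
    linarith
  have hodd : ∀ n : ℕ, (A l)^[2 * n + 1] (x, y) = A l (g n) := by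
    intro n
    have : 2 * n + 1 = 1 + 2 * n := by ring
    simp only [hg, this, Function.iterate_add_apply, Function.iterate_one]
  have hle1 : ∀ n : ℕ, ((A l)^[2 * n + 1] (x, y)).1 ≤ -(n : ℝ) := by
    intro n
    rw [hodd n]
    have hp := hge2 n
    have hfl : (⌊l * (g n).2⌋ : ℝ) ≤ l * (g n).2 := Int.floor_le _
    have : l * (g n).2 ≤ -(g n).2 := by nlinarith [(main n).2.1]
    simp only [A]
    linarith
  have hle2 : ∀ n : ℕ, ((A l)^[2 * n + 1] (x, y)).2 ≤ -(n : ℝ) := by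
    intro n
    rw [hodd n]
    have hp := hge1 n
    have hfl : (⌊l * (g n).1⌋ : ℝ) ≤ l * (g n).1 := Int.floor_le _
    have : l * (g n).1 ≤ -(g n).1 := by nlinarith [(main n).1.1]
    simp only [A]
    linarith
  refine ⟨?_, ?_, ?_, ?_⟩
  · exact Filter.tendsto_atTop_mono hge1 tendsto_natCast_atTop_atTop
  · exact Filter.tendsto_atTop_mono hge2 tendsto_natCast_atTop_atTop
  · exact Filter.tendsto_atBot_mono hle1 (Filter.tendsto_neg_atBot_iff.mpr tendsto_natCast_atTop_atTop)
  · exact Filter.tendsto_atBot_mono hle2 (Filter.tendsto_neg_atBot_iff.mpr tendsto_natCast_atTop_atTop)
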